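/- Let A and B be real n̄×n matrices such that every row and every column of A contains at most m̄ nonzero entries, and suppose |B_{ij}| ≤ c·|A_{ij}| for all i, j, where c > 0. Then ‖B‖₂ ≤ c · min(m̄, √(rank A)) · ‖A‖₂. -/

import Mathlib

noncomputable section

open scoped Matrix Matrix.Norms.L2Operator

/-- Spectral norm of a real matrix: operator norm induced by the Euclidean norms. -/
def specNorm {m n : ℕ} (A : Matrix (Fin m) (Fin n) ℝ) : ℝ :=
  ‖(Matrix.toEuclideanLin A).toContinuousLinearMap‖

namespace SpecAux

open Finset

variable {m n : ℕ}

lemma specNorm_eq (A : Matrix (Fin m) (Fin n) ℝ) : specNorm A = ‖A‖ := rfl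

lemma specNorm_nonneg (A : Matrix (Fin m) (Fin n) ℝ) : 0 ≤ specNorm A := norm_nonneg _

lemma specNorm_mulVec (A : Matrix (Fin m) (Fin n) ℝ) (x : EuclideanSpace ℝ (Fin n)) :
    ‖(EuclideanSpace.equiv (Fin m) ℝ).symm (A.mulVec x)‖ ≤ specNorm A * ‖x‖ := by
  rw [specNorm_eq]; exact A.l2_opNorm_mulVec x

lemma specNorm_le_bound (A : Matrix (Fin m) (Fin n) ℝ) (K : ℝ) (hK : 0 ≤ K)
    (h : ∀ x : EuclideanSpace ℝ (Fin n),
      ‖(EuclideanSpace.equiv (Fin m) ℝ).symm (A.mulVec x)‖ ≤ K * ‖x‖) :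
    specNorm A ≤ K :=
  ContinuousLinearMap.opNorm_le_bound _ hK h

lemma euclid_norm_sq (y : Fin m → ℝ) :
    ‖(EuclideanSpace.equiv (Fin m) ℝ).symm y‖ ^ 2 = ∑ i, (y i) ^ 2 := by
  rw [EuclideanSpace.norm_eq, Real.sq_sqrt (by positivity)]
  simp [Real.norm_eq_abs, sq_abs]

lemma euclid_norm_sq' (x : EuclideanSpace ℝ (Fin n)) : ‖x‖ ^ 2 = ∑ j, (x j) ^ 2 := by
  rw [EuclideanSpace.norm_eq, Real.sq_sqrt (by positivity)]
  simp [Real.norm_eq_abs, sq_abs]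

lemma le_of_sq_le_sq {a b : ℝ} (ha : 0 ≤ a) (hb : 0 ≤ b) (h : a ^ 2 ≤ b ^ 2) : a ≤ b := by
  nlinarith

lemma entry_le (A : Matrix (Fin m) (Fin n) ℝ) (i : Fin m) (j : Fin n) :
    |A i j| ≤ specNorm A := by
  classical
  set v : EuclideanSpace ℝ (Fin n) := EuclideanSpace.single j (1 : ℝ) with hv
  have hnv : ‖v‖ = 1 := by simp [hv]
  have hmv : ∀ i', A.mulVec v i' = A i' j := by
    intro i'
    simp only [Matrix.mulVec, dotProduct, hv]
    rw [Finset.sum_eq_single j]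
    · simp
    · intro b _ hb; simp [EuclideanSpace.single_apply, hb]
    · simp
  have h := specNorm_mulVec A v
  rw [hnv, mul_one] at h
  refine le_of_sq_le_sq (abs_nonneg _) (specNorm_nonneg A) ?_
  calc |A i j| ^ 2 = (A.mulVec v i) ^ 2 := by rw [hmv, sq_abs]
    _ ≤ ∑ i', (A.mulVec v i') ^ 2 :=
        Finset.single_le_sum (f := fun i' => (A.mulVec v i') ^ 2) (fun i' _ => sq_nonneg _) (Finset.mem_univ i)
    _ = ‖(EuclideanSpace.equiv (Fin m) ℝ).symm (A.mulVec v)‖ ^ 2 := (euclid_norm_sq _).symm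
    _ ≤ specNorm A ^ 2 := by
        have := norm_nonneg ((EuclideanSpace.equiv (Fin m) ℝ).symm (A.mulVec v))
        nlinarith



lemma row_sum_le {mbar : ℕ} (A : Matrix (Fin m) (Fin n) ℝ)
    (hrow : ∀ i, (Finset.univ.filter fun j => A i j ≠ 0).card ≤ mbar) (i : Fin m) :
    ∑ j, |A i j| ≤ (mbar : ℝ) * specNorm A := by
  classical
  have h1 : ∑ j, |A i j| = ∑ j ∈ Finset.univ.filter (fun j => A i j ≠ 0), |A i j| :=
    (Finset.sum_filter_of_ne (fun j _ h => by simpa [abs_eq_zero] using h)).symm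
  rw [h1]
  calc ∑ j ∈ Finset.univ.filter (fun j => A i j ≠ 0), |A i j|
      ≤ (Finset.univ.filter (fun j => A i j ≠ 0)).card • specNorm A :=
        Finset.sum_le_card_nsmul _ _ _ (fun j _ => entry_le A i j)
    _ = ((Finset.univ.filter (fun j => A i j ≠ 0)).card : ℝ) * specNorm A := by
        rw [nsmul_eq_mul]
    _ ≤ (mbar : ℝ) * specNorm A := by
        have := hrow i
        exact mul_le_mul_of_nonneg_right (by exact_mod_cast this) (specNorm_nonneg A)

lemma col_sum_le {mbar : ℕ} (A : Matrix (Fin m) (Fin n) ℝ)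
    (hcol : ∀ j, (Finset.univ.filter fun i => A i j ≠ 0).card ≤ mbar) (j : Fin n) :
    ∑ i, |A i j| ≤ (mbar : ℝ) * specNorm A := by
  classical
  have h1 : ∑ i, |A i j| = ∑ i ∈ Finset.univ.filter (fun i => A i j ≠ 0), |A i j| :=
    (Finset.sum_filter_of_ne (fun i _ h => by simpa [abs_eq_zero] using h)).symm
  rw [h1]
  calc ∑ i ∈ Finset.univ.filter (fun i => A i j ≠ 0), |A i j|
      ≤ (Finset.univ.filter (fun i => A i j ≠ 0)).card • specNorm A :=
        Finset.sum_le_card_nsmul _ _ _ (fun i _ => entry_le A i j)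
    _ = ((Finset.univ.filter (fun i => A i j ≠ 0)).card : ℝ) * specNorm A := by
        rw [nsmul_eq_mul]
    _ ≤ (mbar : ℝ) * specNorm A := by
        have := hcol j
        exact mul_le_mul_of_nonneg_right (by exact_mod_cast this) (specNorm_nonneg A)

/-- The `ℓ¹-ℓ∞` (Schur test) bound. -/
lemma specNorm_le_of_row_col (B : Matrix (Fin m) (Fin n) ℝ) (K : ℝ) (hK : 0 ≤ K)
    (hR : ∀ i, ∑ j, |B i j| ≤ K) (hC : ∀ j, ∑ i, |B i j| ≤ K) :
    specNorm B ≤ K := by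
  apply specNorm_le_bound _ K hK
  intro x
  refine le_of_sq_le_sq (norm_nonneg _) (mul_nonneg hK (norm_nonneg _)) ?_
  rw [euclid_norm_sq, mul_pow, euclid_norm_sq' x]
  have key : ∑ i, (B.mulVec x i) ^ 2 ≤ K ^ 2 * ∑ j, (x j) ^ 2 := by
    have step1 : ∀ i, (B.mulVec x i) ^ 2 ≤ (∑ j, |B i j|) * (∑ j, |B i j| * (x j) ^ 2) := by
      intro i
      have : B.mulVec x i = ∑ j, B i j * x j := by
        simp [Matrix.mulVec, dotProduct]
      rw [this]
      refine Finset.sum_sq_le_sum_mul_sum_of_sq_eq_mul Finset.univ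
        (fun j _ => abs_nonneg _) (fun j _ => mul_nonneg (abs_nonneg _) (sq_nonneg _)) ?_
      intro j _
      rw [mul_pow, ← sq_abs (B i j)]
      ring
    calc ∑ i, (B.mulVec x i) ^ 2
        ≤ ∑ i, (∑ j, |B i j|) * (∑ j, |B i j| * (x j) ^ 2) :=
          Finset.sum_le_sum (fun i _ => step1 i)
      _ ≤ ∑ i, K * (∑ j, |B i j| * (x j) ^ 2) := by
          refine Finset.sum_le_sum (fun i _ => ?_)
          exact mul_le_mul_of_nonneg_right (hR i)
            (Finset.sum_nonneg fun j _ => mul_nonneg (abs_nonneg _) (sq_nonneg _))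
      _ = K * ∑ j, (∑ i, |B i j|) * (x j) ^ 2 := by
          rw [← Finset.mul_sum]
          congr 1
          rw [Finset.sum_comm]
          exact Finset.sum_congr rfl fun j _ => (Finset.sum_mul _ _ _).symm
      _ ≤ K * ∑ j, K * (x j) ^ 2 := by
          refine mul_le_mul_of_nonneg_left (Finset.sum_le_sum fun j _ => ?_) hK
          exact mul_le_mul_of_nonneg_right (hC j) (sq_nonneg _)
      _ = K ^ 2 * ∑ j, (x j) ^ 2 := by rw [← Finset.mul_sum]; ring
  exact key

def frobSq (A : Matrix (Fin m) (Fin n) ℝ) : ℝ := ∑ i, ∑ j, (A i j) ^ 2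

lemma frobSq_nonneg (A : Matrix (Fin m) (Fin n) ℝ) : 0 ≤ frobSq A := by
  refine Finset.sum_nonneg fun i _ => Finset.sum_nonneg fun j _ => sq_nonneg _

lemma specNorm_le_sqrt_frobSq (B : Matrix (Fin m) (Fin n) ℝ) :
    specNorm B ≤ Real.sqrt (frobSq B) := by
  apply specNorm_le_bound _ _ (Real.sqrt_nonneg _)
  intro x
  refine le_of_sq_le_sq (norm_nonneg _)
    (mul_nonneg (Real.sqrt_nonneg _) (norm_nonneg _)) ?_
  rw [euclid_norm_sq, mul_pow, Real.sq_sqrt (frobSq_nonneg B), euclid_norm_sq' x]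
  calc ∑ i, (B.mulVec x i) ^ 2
      ≤ ∑ i, (∑ j, (B i j) ^ 2) * (∑ j, (x j) ^ 2) := by
        refine Finset.sum_le_sum fun i _ => ?_
        have : B.mulVec x i = ∑ j, B i j * x j := by
          simp [Matrix.mulVec, dotProduct]
        rw [this]
        exact Finset.sum_mul_sq_le_sq_mul_sq Finset.univ _ _
    _ = frobSq B * ∑ j, (x j) ^ 2 := (Finset.sum_mul _ _ _).symm



lemma frobSq_le_mul (A B : Matrix (Fin m) (Fin n) ℝ) {c : ℝ} (hc : 0 ≤ c)
    (hB : ∀ i j, |B i j| ≤ c * |A i j|) : frobSq B ≤ c ^ 2 * frobSq A := by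
  unfold frobSq
  rw [Finset.mul_sum]
  refine Finset.sum_le_sum fun i _ => ?_
  rw [Finset.mul_sum]
  refine Finset.sum_le_sum fun j _ => ?_
  have h := hB i j
  calc (B i j) ^ 2 = |B i j| ^ 2 := (sq_abs _).symm
    _ ≤ (c * |A i j|) ^ 2 := by nlinarith [abs_nonneg (B i j), abs_nonneg (A i j)]
    _ = c ^ 2 * (A i j) ^ 2 := by rw [mul_pow, sq_abs]

lemma frobSq_eq_trace (A : Matrix (Fin m) (Fin n) ℝ) : frobSq A = (Aᴴ * A).trace := by
  unfold frobSq
  simp only [Matrix.trace, Matrix.diag_apply, Matrix.mul_apply, Matrix.conjTranspose_apply,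
    star_trivial]
  simp only [← pow_two]
  exact Finset.sum_comm

lemma trace_eq_sum_eigenvalues {k : ℕ} (G : Matrix (Fin k) (Fin k) ℝ) (hH : G.IsHermitian) :
    G.trace = ∑ i, hH.eigenvalues i := by
  conv_lhs => rw [hH.spectral_theorem, Unitary.conjStarAlgAut_apply]
  rw [Matrix.trace_mul_comm, ← mul_assoc,
    Matrix.mem_unitaryGroup_iff'.mp (Matrix.IsHermitian.eigenvectorUnitary hH).2, one_mul,
    Matrix.trace_diagonal]
  simp

lemma eigenvalue_le {k : ℕ} (G : Matrix (Fin k) (Fin k) ℝ) (hH : G.IsHermitian) (i : Fin k) :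
    hH.eigenvalues i ≤ specNorm G := by
  have hv := hH.mulVec_eigenvectorBasis i
  have hnv : ‖hH.eigenvectorBasis i‖ = 1 := hH.eigenvectorBasis.orthonormal.1 i
  have h := specNorm_mulVec G (hH.eigenvectorBasis i)
  rw [hnv, mul_one] at h
  have h2 : (EuclideanSpace.equiv (Fin k) ℝ).symm (G.mulVec (hH.eigenvectorBasis i))
      = hH.eigenvalues i • hH.eigenvectorBasis i := by
    ext j
    exact congrFun hv j
  rw [h2, norm_smul, hnv, mul_one, Real.norm_eq_abs] at h
  exact (le_abs_self _).trans h

lemma specNorm_conjTranspose_mul_self (A : Matrix (Fin m) (Fin n) ℝ) :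
    specNorm (Aᴴ * A) = specNorm A ^ 2 := by
  rw [specNorm_eq, specNorm_eq, Matrix.l2_opNorm_conjTranspose_mul_self, sq]

lemma frobSq_le_rank (A : Matrix (Fin m) (Fin n) ℝ) :
    frobSq A ≤ (A.rank : ℝ) * specNorm A ^ 2 := by
  classical
  have hG : (Aᴴ * A).PosSemidef := Matrix.posSemidef_conjTranspose_mul_self A
  have hH : (Aᴴ * A).IsHermitian := hG.1
  have hrank : (A.rank : ℝ)
      = ((Finset.univ.filter fun i => hH.eigenvalues i ≠ 0).card : ℝ) := by
    rw [← Matrix.rank_conjTranspose_mul_self A, hH.rank_eq_card_non_zero_eigs]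
    norm_cast
    exact Fintype.card_subtype _
  have hle : ∀ i, hH.eigenvalues i ≤ specNorm A ^ 2 := fun i =>
    (eigenvalue_le _ hH i).trans_eq (specNorm_conjTranspose_mul_self A)
  calc frobSq A = (Aᴴ * A).trace := frobSq_eq_trace A
    _ = ∑ i, hH.eigenvalues i := trace_eq_sum_eigenvalues _ hH
    _ = ∑ i ∈ Finset.univ.filter (fun i => hH.eigenvalues i ≠ 0), hH.eigenvalues i :=
        (Finset.sum_filter_ne_zero _).symm
    _ ≤ (Finset.univ.filter (fun i => hH.eigenvalues i ≠ 0)).card • (specNorm A ^ 2) :=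
        Finset.sum_le_card_nsmul _ _ _ (fun i _ => hle i)
    _ = ((Finset.univ.filter (fun i => hH.eigenvalues i ≠ 0)).card : ℝ) * specNorm A ^ 2 :=
        nsmul_eq_mul _ _
    _ = (A.rank : ℝ) * specNorm A ^ 2 := by rw [hrank]

end SpecAux

/-- if every row and column of `A` has at most `mbar` nonzero entries and
`|B i j| ≤ c * |A i j|` entrywise, then `‖B‖₂ ≤ c * min(mbar, √(rank A)) * ‖A‖₂`. -/
theorem spectral_norm_entrywise_dominated
    {nbar n : ℕ} (mbar : ℕ) (A B : Matrix (Fin nbar) (Fin n) ℝ) (c : ℝ) (hc : 0 < c)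
    (hrow : ∀ i, (Finset.univ.filter fun j => A i j ≠ 0).card ≤ mbar)
    (hcol : ∀ j, (Finset.univ.filter fun i => A i j ≠ 0).card ≤ mbar)
    (hB : ∀ i j, |B i j| ≤ c * |A i j|) :
    specNorm B ≤ c * min (mbar : ℝ) (Real.sqrt (A.rank : ℝ)) * specNorm A := by
  have hc' : (0 : ℝ) ≤ c := hc.le
  have hM : (0 : ℝ) ≤ specNorm A := SpecAux.specNorm_nonneg A
  rcases le_total (mbar : ℝ) (Real.sqrt (A.rank : ℝ)) with hmin | hmin
  · rw [min_eq_left hmin]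
    have hR : ∀ i, ∑ j, |B i j| ≤ c * (mbar : ℝ) * specNorm A := by
      intro i
      calc ∑ j, |B i j| ≤ ∑ j, c * |A i j| := Finset.sum_le_sum fun j _ => hB i j
        _ = c * ∑ j, |A i j| := (Finset.mul_sum _ _ _).symm
        _ ≤ c * ((mbar : ℝ) * specNorm A) :=
            mul_le_mul_of_nonneg_left (SpecAux.row_sum_le A hrow i) hc'
        _ = c * (mbar : ℝ) * specNorm A := (mul_assoc _ _ _).symm
    have hC : ∀ j, ∑ i, |B i j| ≤ c * (mbar : ℝ) * specNorm A := by
      intro j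
      calc ∑ i, |B i j| ≤ ∑ i, c * |A i j| := Finset.sum_le_sum fun i _ => hB i j
        _ = c * ∑ i, |A i j| := (Finset.mul_sum _ _ _).symm
        _ ≤ c * ((mbar : ℝ) * specNorm A) :=
            mul_le_mul_of_nonneg_left (SpecAux.col_sum_le A hcol j) hc'
        _ = c * (mbar : ℝ) * specNorm A := (mul_assoc _ _ _).symm
    exact SpecAux.specNorm_le_of_row_col B _ (by positivity) hR hC
  · rw [min_eq_right hmin]
    have h1 := SpecAux.specNorm_le_sqrt_frobSq B
    have h2 : SpecAux.frobSq B ≤ c ^ 2 * SpecAux.frobSq A := SpecAux.frobSq_le_mul A B hc' hB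
    have h3 : SpecAux.frobSq A ≤ (A.rank : ℝ) * specNorm A ^ 2 := SpecAux.frobSq_le_rank A
    have h4 : SpecAux.frobSq B ≤ c ^ 2 * ((A.rank : ℝ) * specNorm A ^ 2) :=
      h2.trans (mul_le_mul_of_nonneg_left h3 (sq_nonneg c))
    calc specNorm B ≤ Real.sqrt (SpecAux.frobSq B) := h1
      _ ≤ Real.sqrt (c ^ 2 * ((A.rank : ℝ) * specNorm A ^ 2)) := Real.sqrt_le_sqrt h4
      _ = c * Real.sqrt (A.rank : ℝ) * specNorm A := by
          rw [Real.sqrt_mul (sq_nonneg c), Real.sqrt_sq hc',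
            Real.sqrt_mul (Nat.cast_nonneg _), Real.sqrt_sq hM]
          ring
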